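/- For every p with 1 < p < 6/5, sup_{y ∈ ℝ³} ∫_{ℝ³} (1 + ||x| − |y||²)^{−p/2} · min( (1+|x|²)^{−1}, (1+|y|²)^{−1} )^{p} dx < ∞. Equivalently, with K₂(x,y) := ⟨|x| − |y|⟩^{−1} min(⟨x⟩^{−2}, ⟨y⟩^{−2}), one has sup_{y ∈ ℝ³} ‖K₂(·, y)‖_{L^p(ℝ³)} < ∞. -/

import Mathlib

open MeasureTheory Real
open scoped ENNReal NNReal

open Set

lemma jap_integrable {p : ℝ} (hp : 1 < p) :
    Integrable (fun s : ℝ => (1 + s ^ 2) ^ (-(p/2))) := by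
  have := integrable_rpow_neg_one_add_norm_sq (E := ℝ) (μ := volume) (r := p) (by simpa using hp)
  simpa [Real.norm_eq_abs, sq_abs, neg_div] using this

lemma one_add_abs_le (s : ℝ) : 1 + |s| ≤ Real.sqrt 2 * Real.sqrt (1 + s ^ 2) := by
  rw [← Real.sqrt_mul (by norm_num)]
  have h1 : 1 + |s| = Real.sqrt ((1 + |s|) ^ 2) := (Real.sqrt_sq (by positivity)).symm
  rw [h1]
  apply Real.sqrt_le_sqrt
  nlinarith [sq_nonneg (|s| - 1), sq_abs s]

/-- Pointwise 1d bound: `⟨r-R⟩^{-p}⟨r⟩^{-2} ≤ 2(√2(1+R))^p (1+r)^{-(2+p)}`. -/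
lemma pointwise_bound {p : ℝ} (hp : 0 < p) (R : ℝ) (hR : 0 ≤ R) (r : ℝ) (hr : 0 ≤ r) :
    (1 + (r - R) ^ 2) ^ (-(p/2)) * (1 + r ^ 2)⁻¹
      ≤ 2 * (Real.sqrt 2 * (1 + R)) ^ p * (1 + r) ^ (-(2 + p)) := by
  have hb : (0:ℝ) < 1 + (r - R) ^ 2 := by positivity
  have h1r : (0:ℝ) < 1 + r := by linarith
  have hc : (0:ℝ) < (Real.sqrt 2 * (1 + R)) ^ p := by
    apply Real.rpow_pos_of_pos; positivity
  -- step (a): (1+r)^p ≤ (√2(1+R))^p * (1+(r-R)^2)^(p/2)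
  have ha : (1 + r) ^ p ≤ (Real.sqrt 2 * (1 + R)) ^ p * (1 + (r - R) ^ 2) ^ (p/2) := by
    have key : 1 + r ≤ Real.sqrt 2 * (1 + R) * Real.sqrt (1 + (r - R) ^ 2) := by
      have h2 : 1 + r ≤ (1 + R) * (1 + |r - R|) := by
        have h4 : r ≤ R + |r - R| := by
          have := le_abs_self (r - R); linarith
        nlinarith [abs_nonneg (r - R)]
      have h3 : 1 + |r - R| ≤ Real.sqrt 2 * Real.sqrt (1 + (r - R) ^ 2) := one_add_abs_le _
      calc 1 + r ≤ (1 + R) * (1 + |r - R|) := h2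
        _ ≤ (1 + R) * (Real.sqrt 2 * Real.sqrt (1 + (r - R) ^ 2)) :=
            mul_le_mul_of_nonneg_left h3 (by linarith)
        _ = Real.sqrt 2 * (1 + R) * Real.sqrt (1 + (r - R) ^ 2) := by ring
    have hsq : (Real.sqrt (1 + (r - R) ^ 2)) ^ p = (1 + (r - R) ^ 2) ^ (p/2) := by
      rw [Real.sqrt_eq_rpow, ← Real.rpow_mul hb.le, one_div, inv_mul_eq_div]
    calc (1 + r) ^ p ≤ (Real.sqrt 2 * (1 + R) * Real.sqrt (1 + (r - R) ^ 2)) ^ p :=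
          Real.rpow_le_rpow (by linarith) key hp.le
      _ = (Real.sqrt 2 * (1 + R)) ^ p * (Real.sqrt (1 + (r - R) ^ 2)) ^ p :=
          Real.mul_rpow (by positivity) (Real.sqrt_nonneg _)
      _ = (Real.sqrt 2 * (1 + R)) ^ p * (1 + (r - R) ^ 2) ^ (p/2) := by rw [hsq]
  -- from (a): (1+(r-R)^2)^(-(p/2)) ≤ (√2(1+R))^p * (1+r)^(-p)
  have ha' : (1 + (r - R) ^ 2) ^ (-(p/2)) ≤ (Real.sqrt 2 * (1 + R)) ^ p * (1 + r) ^ (-p) := by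
    rw [Real.rpow_neg hb.le, Real.rpow_neg h1r.le, ← div_eq_mul_inv,
      le_div_iff₀ (Real.rpow_pos_of_pos h1r p), mul_comm,
      mul_inv_le_iff₀ (Real.rpow_pos_of_pos hb _)]
    exact ha
  -- step (b): (1+r²)⁻¹ ≤ 2 * (1+r)^(-2)
  have hb' : (1 + r ^ 2)⁻¹ ≤ 2 * (1 + r) ^ (-(2:ℝ)) := by
    have h2 : (1 + r) ^ (-(2:ℝ)) = ((1 + r) ^ (2:ℕ))⁻¹ := by
      rw [Real.rpow_neg h1r.le]; norm_num
    rw [h2, ← div_eq_mul_inv, le_div_iff₀ (by positivity),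
      inv_mul_le_iff₀ (by positivity)]
    nlinarith [sq_nonneg (1 - r)]
  have hmul := mul_le_mul ha' hb' (by positivity) (by positivity)
  calc (1 + (r - R) ^ 2) ^ (-(p/2)) * (1 + r ^ 2)⁻¹
      ≤ (Real.sqrt 2 * (1 + R)) ^ p * (1 + r) ^ (-p) * (2 * (1 + r) ^ (-(2:ℝ))) := hmul
    _ = 2 * (Real.sqrt 2 * (1 + R)) ^ p * ((1 + r) ^ (-p) * (1 + r) ^ (-(2:ℝ))) := by ring
    _ = 2 * (Real.sqrt 2 * (1 + R)) ^ p * (1 + r) ^ (-(2 + p)) := by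
        rw [← Real.rpow_add h1r]; ring_nf

/-- Estimate (3.47) for the kernel `K₂(x,y) = ⟨|x|−|y|⟩⁻¹ min(⟨x⟩⁻², ⟨y⟩⁻²)`:
its `L^p(ℝ³)` norm in `x` is bounded uniformly in `y`, for `1 < p < 6/5`. -/
theorem kernel_K2_uniform_Lp_bound (p : ℝ) (hp1 : 1 < p) (hp2 : p < 6 / 5) :
    (⨆ y : EuclideanSpace ℝ (Fin 3),
      ∫⁻ x : EuclideanSpace ℝ (Fin 3),
        ENNReal.ofReal ((1 + (‖x‖ - ‖y‖) ^ 2) ^ (-(p / 2)) *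
          (min ((1 + ‖x‖ ^ 2)⁻¹) ((1 + ‖y‖ ^ 2)⁻¹)) ^ p) ∂volume) < ⊤ := by
  set E := EuclideanSpace ℝ (Fin 3)
  have hp0 : 0 < p := by linarith
  set C₀ : ℝ := ∫ s : ℝ, (1 + s ^ 2) ^ (-(p/2)) with hC₀def
  have hC₀int : Integrable (fun s : ℝ => (1 + s ^ 2) ^ (-(p/2))) := jap_integrable hp1
  refine lt_of_le_of_lt (iSup_le fun y => ?_)
    (ENNReal.ofReal_lt_top :
      ENNReal.ofReal (3 * (volume (Metric.ball (0:E) 1)).toReal * C₀) < ⊤)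
  set R := ‖y‖ with hRdef
  have hR : 0 ≤ R := norm_nonneg y
  set f : ℝ → ℝ := fun r => (1 + (r - R) ^ 2) ^ (-(p/2)) * (1 + r ^ 2)⁻¹ with hfdef
  have hf_nonneg : ∀ r, 0 ≤ f r := fun r => by
    apply mul_nonneg (Real.rpow_nonneg (by positivity) _) (by positivity)
  have hf_cont : Continuous f := by
    apply Continuous.mul
    · exact Continuous.rpow_const (by fun_prop) (fun r => Or.inl (by positivity))
    · exact (continuous_const.add (continuous_pow 2)).inv₀ (fun r => (by positivity : (1:ℝ) + r ^ 2 ≠ 0))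
  -- integrability of x ↦ f ‖x‖ on ℝ³
  have hFint : Integrable (fun x : E => f ‖x‖) := by
    have hgr : Integrable (fun x : E => (2 * (Real.sqrt 2 * (1 + R)) ^ p) * (1 + ‖x‖) ^ (-(2 + p))) :=
      (integrable_one_add_norm (E := E) (by simp [E]; linarith)).const_mul _
    refine hgr.mono' ((hf_cont.comp continuous_norm).aestronglyMeasurable) ?_
    filter_upwards with x
    rw [Real.norm_of_nonneg (hf_nonneg _)]
    exact pointwise_bound hp0 R hR ‖x‖ (norm_nonneg x)
  -- step 1: pointwise bound of the integrand
  have step1 : ∀ x : E,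
      ENNReal.ofReal ((1 + (‖x‖ - ‖y‖) ^ 2) ^ (-(p / 2)) *
        (min ((1 + ‖x‖ ^ 2)⁻¹) ((1 + ‖y‖ ^ 2)⁻¹)) ^ p) ≤ ENNReal.ofReal (f ‖x‖) := by
    intro x
    apply ENNReal.ofReal_le_ofReal
    apply mul_le_mul_of_nonneg_left _ (Real.rpow_nonneg (by positivity) _)
    have hminpos : 0 < min ((1 + ‖x‖ ^ 2)⁻¹) ((1 + ‖y‖ ^ 2)⁻¹) := by positivity
    have hmin1 : min ((1 + ‖x‖ ^ 2)⁻¹) ((1 + ‖y‖ ^ 2)⁻¹) ≤ 1 :=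
      le_trans (min_le_left _ _) (by rw [inv_le_one_iff₀]; right; nlinarith [sq_nonneg ‖x‖])
    calc (min ((1 + ‖x‖ ^ 2)⁻¹) ((1 + ‖y‖ ^ 2)⁻¹)) ^ p
        ≤ (min ((1 + ‖x‖ ^ 2)⁻¹) ((1 + ‖y‖ ^ 2)⁻¹)) ^ (1:ℝ) :=
          Real.rpow_le_rpow_of_exponent_ge hminpos hmin1 hp1.le
      _ = min ((1 + ‖x‖ ^ 2)⁻¹) ((1 + ‖y‖ ^ 2)⁻¹) := Real.rpow_one _
      _ ≤ (1 + ‖x‖ ^ 2)⁻¹ := min_le_left _ _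
  -- 1d comparison
  have hInt2 : Integrable (fun r : ℝ => (1 + (r - R) ^ 2) ^ (-(p/2))) :=
    hC₀int.comp_sub_right R
  have hptw : ∀ r : ℝ, r ^ 2 * f r ≤ (1 + (r - R) ^ 2) ^ (-(p/2)) := by
    intro r
    have h1 : r ^ 2 * (1 + r ^ 2)⁻¹ ≤ 1 := by
      rw [← div_eq_mul_inv, div_le_one (by positivity)]; linarith
    calc r ^ 2 * f r = (1 + (r - R) ^ 2) ^ (-(p/2)) * (r ^ 2 * (1 + r ^ 2)⁻¹) := by
          rw [hfdef]; ring
      _ ≤ (1 + (r - R) ^ 2) ^ (-(p/2)) * 1 :=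
          mul_le_mul_of_nonneg_left h1 (Real.rpow_nonneg (by positivity) _)
      _ = _ := mul_one _
  have hIntOn : IntegrableOn (fun r : ℝ => r ^ 2 * f r) (Ioi 0) := by
    refine (hInt2.integrableOn).mono' ?_ ?_
    · exact ((continuous_pow 2).mul hf_cont).aestronglyMeasurable.restrict
    · filter_upwards with r
      rw [Real.norm_of_nonneg (mul_nonneg (sq_nonneg r) (hf_nonneg r))]
      exact hptw r
  have h1d : ∫ r in Ioi (0:ℝ), r ^ 2 * f r ≤ C₀ := by
    calc ∫ r in Ioi (0:ℝ), r ^ 2 * f r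
        ≤ ∫ r in Ioi (0:ℝ), (1 + (r - R) ^ 2) ^ (-(p/2)) :=
          setIntegral_mono_on hIntOn hInt2.integrableOn measurableSet_Ioi
            (fun r _ => hptw r)
      _ ≤ ∫ r : ℝ, (1 + (r - R) ^ 2) ^ (-(p/2)) :=
          setIntegral_le_integral hInt2
            (Filter.Eventually.of_forall fun r => Real.rpow_nonneg (by positivity) _)
      _ = C₀ := integral_sub_right_eq_self (fun s : ℝ => (1 + s ^ 2) ^ (-(p/2))) R
  -- assemble
  have hvol : (0:ℝ) ≤ (volume (Metric.ball (0:E) 1)).toReal := ENNReal.toReal_nonneg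
  calc ∫⁻ x : E, ENNReal.ofReal ((1 + (‖x‖ - ‖y‖) ^ 2) ^ (-(p / 2)) *
          (min ((1 + ‖x‖ ^ 2)⁻¹) ((1 + ‖y‖ ^ 2)⁻¹)) ^ p) ∂volume
      ≤ ∫⁻ x : E, ENNReal.ofReal (f ‖x‖) ∂volume := lintegral_mono step1
    _ = ENNReal.ofReal (∫ x : E, f ‖x‖ ∂volume) :=
        (ofReal_integral_eq_lintegral_ofReal hFint
          (Filter.Eventually.of_forall fun x => hf_nonneg _)).symm
    _ ≤ ENNReal.ofReal (3 * (volume (Metric.ball (0:E) 1)).toReal * C₀) := by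
        apply ENNReal.ofReal_le_ofReal
        have hrad := integral_fun_norm_addHaar (volume : Measure E) f
        have h3 : Module.finrank ℝ E = 3 := by simp [E]
        rw [h3] at hrad
        simp only [nsmul_eq_mul, smul_eq_mul, Nat.cast_ofNat] at hrad
        rw [hrad]
        have : ∫ r in Ioi (0:ℝ), r ^ (3 - 1) * f r ≤ C₀ := by
          norm_num
          exact h1d
        calc (3:ℝ) * ((volume (Metric.ball (0:E) 1)).toReal * ∫ r in Ioi (0:ℝ), r ^ (3-1) * f r)
            ≤ 3 * ((volume (Metric.ball (0:E) 1)).toReal * C₀) := by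
              apply mul_le_mul_of_nonneg_left (mul_le_mul_of_nonneg_left this hvol) (by norm_num)
          _ = 3 * (volume (Metric.ball (0:E) 1)).toReal * C₀ := by ring
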